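/- Let g : Λ → ℝ⁺ be a function on a nonempty set Λ ⊆ ℝ of positive reals, and suppose for each pair (i,k) in a finite index set S of size n there is a family of test martingales M^λ_{i,k}(t) ≥ exp(λ X_{i,k}(t) − g(λ)) such that for each λ ∈ Λ the product Π_{(i,k)∈S} M^λ_{i,k}(t) is a nonnegative martingale with initial expectation 1. Define C^g(x) = inf_{λ∈Λ} (g(λ)+x)/λ. Then for all x > 0, P(∃t ∈ ℕ : Σ_{(i,k)∈S} X_{i,k}(t) > n·C^g(x/n)) ≤ e^{−x}. -/

import Mathlib

open MeasureTheory
open scoped NNReal ENNReal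

/-- If for each `λ ∈ Λ` (a nonempty set of positive reals) there are
nonnegative test martingales `M λ i t ≥ exp(λ X_i(t) − g λ)` whose product over the finite
index set is a martingale with initial expectation 1, then with
`C^g(x) = inf_{λ∈Λ} (g λ + x)/λ` and `n` the size of the index set, for every `x > 0`,
`P(∃ t, Σᵢ Xᵢ(t) > n · C^g(x/n)) ≤ e^{−x}`. -/
theorem stmt_10 {Ω ι : Type*} [Fintype ι] [Nonempty ι] {m0 : MeasurableSpace Ω}
    (μ : Measure Ω) [IsProbabilityMeasure μ] (ℱ : Filtration ℕ m0)
    (Λ : Set ℝ) (hΛ : Λ.Nonempty) (hΛpos : Λ ⊆ Set.Ioi 0)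
    (g : ℝ → ℝ) (hg : ∀ l ∈ Λ, 0 ≤ g l)
    (X : ι → ℕ → Ω → ℝ) (M : ℝ → ι → ℕ → Ω → ℝ)
    (hMnn : ∀ l ∈ Λ, ∀ i t ω, 0 ≤ M l i t ω)
    (hdom : ∀ l ∈ Λ, ∀ i t ω, Real.exp (l * X i t ω - g l) ≤ M l i t ω)
    (hmart : ∀ l ∈ Λ, Martingale (fun t ω => ∏ i, M l i t ω) ℱ μ)
    (hinit : ∀ l ∈ Λ, ∫ ω, (∏ i, M l i 0 ω) ∂μ = 1) :
    ∀ x : ℝ, 0 < x →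
      μ {ω | ∃ t : ℕ, (Fintype.card ι : ℝ) *
            sInf ((fun l => (g l + x / (Fintype.card ι : ℝ)) / l) '' Λ) < ∑ i, X i t ω}
        ≤ ENNReal.ofReal (Real.exp (-x)) := by
  intro x hx
  have hnpos : 0 < Fintype.card ι := Fintype.card_pos
  have hnR : (0 : ℝ) < (Fintype.card ι : ℝ) := Nat.cast_pos.2 hnpos
  set n : ℝ := (Fintype.card ι : ℝ) with hn
  set C : ℝ := sInf ((fun l => (g l + x / n) / l) '' Λ) with hC
  have hbdd : BddBelow ((fun l => (g l + x / n) / l) '' Λ) := by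
    refine ⟨0, ?_⟩
    rintro y ⟨l, hl, rfl⟩
    have hl0 : 0 < l := hΛpos hl
    exact div_nonneg (add_nonneg (hg l hl) (div_pos hx hnR).le) hl0.le
  -- key estimate with slack ε
  have key : ∀ ε : ℝ, 0 < ε →
      μ {ω | ∃ t : ℕ, n * C + ε ≤ ∑ i, X i t ω} ≤ ENNReal.ofReal (Real.exp (-x)) := by
    intro ε hε
    have hlt : C < C + ε / n := lt_add_of_pos_right _ (div_pos hε hnR)
    obtain ⟨y, ⟨l, hl, rfl⟩, hy⟩ := (csInf_lt_iff hbdd (hΛ.image _)).1 hlt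
    have hl0 : 0 < l := hΛpos hl
    set f : ℕ → Ω → ℝ := fun t ω => ∏ i, M l i t ω with hf
    have hfmart : Martingale f ℱ μ := hmart l hl
    have hfnn : 0 ≤ f := fun t => fun ω => Finset.prod_nonneg fun i _ => hMnn l hl i t ω
    set ε₀ : ℝ≥0 := Real.toNNReal (Real.exp x) with hε₀
    have hε₀c : (ε₀ : ℝ) = Real.exp x := Real.coe_toNNReal _ (Real.exp_pos x).le
    set B : ℕ → Set Ω := fun k =>
      {ω | (ε₀ : ℝ) ≤ (Finset.range (k + 1)).sup' Finset.nonempty_range_add_one fun j => f j ω}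
      with hB
    have hBmono : Monotone B := by
      intro a b hab ω hω
      exact le_trans hω (Finset.sup'_mono (fun j => f j ω)
        (Finset.range_subset_range.2 (Nat.add_le_add_right hab 1)) Finset.nonempty_range_add_one)
    have hsub : {ω | ∃ t : ℕ, n * C + ε ≤ ∑ i, X i t ω} ⊆ ⋃ k, B k := by
      rintro ω ⟨t, ht⟩
      have h1 : n * ((g l + x / n) / l) < n * (C + ε / n) :=
        mul_lt_mul_of_pos_left hy hnR
      have h2 : n * (C + ε / n) = n * C + ε := by
        rw [mul_add, mul_div_cancel₀ _ (ne_of_gt hnR)]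
      have h3 : n * ((g l + x / n) / l) < ∑ i, X i t ω := by
        rw [h2] at h1; linarith
      have h4 : n * g l + x < l * ∑ i, X i t ω := by
        have := mul_lt_mul_of_pos_left h3 hl0
        have hxeq : l * (n * ((g l + x / n) / l)) = n * g l + x := by
          field_simp
        rw [hxeq] at this
        linarith
      have h5 : Real.exp x ≤ f t ω := by
        have hexp : Real.exp x ≤ Real.exp (l * (∑ i, X i t ω) - n * g l) :=
          Real.exp_le_exp.2 (by linarith)
        have hsum : l * (∑ i, X i t ω) - n * g l = ∑ i, (l * X i t ω - g l) := by
          rw [Finset.sum_sub_distrib, ← Finset.mul_sum, Finset.sum_const,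
            Finset.card_univ, nsmul_eq_mul]
        have hprod : Real.exp (∑ i, (l * X i t ω - g l)) ≤ f t ω := by
          rw [Real.exp_sum]
          exact Finset.prod_le_prod (fun i _ => (Real.exp_pos _).le)
            (fun i _ => hdom l hl i t ω)
        calc Real.exp x ≤ Real.exp (l * (∑ i, X i t ω) - n * g l) := hexp
          _ = Real.exp (∑ i, (l * X i t ω - g l)) := by rw [hsum]
          _ ≤ f t ω := hprod
      refine Set.mem_iUnion.2 ⟨t, ?_⟩
      have : f t ω ≤ (Finset.range (t + 1)).sup' Finset.nonempty_range_add_one fun j => f j ω :=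
        Finset.le_sup' (fun j => f j ω) (Finset.self_mem_range_succ t)
      simp only [B, Set.mem_setOf_eq, hε₀c]
      linarith
    have hint : ∀ k : ℕ, ∫ ω, f k ω ∂μ = 1 := by
      intro k
      have hcond := hfmart.2 0 k (Nat.zero_le _)
      calc ∫ ω, f k ω ∂μ = ∫ ω, (μ[f k | ℱ 0]) ω ∂μ := (integral_condExp (ℱ.le 0)).symm
        _ = ∫ ω, f 0 ω ∂μ := integral_congr_ae hcond
        _ = 1 := hinit l hl
    have hBk : ∀ k : ℕ, μ (B k) ≤ ENNReal.ofReal (Real.exp (-x)) := by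
      intro k
      have hmax := maximal_ineq hfmart.submartingale hfnn (ε := ε₀) k
      have hsetint : ∫ ω in B k, f k ω ∂μ ≤ ∫ ω, f k ω ∂μ :=
        setIntegral_le_integral (hfmart.integrable k)
          (Filter.Eventually.of_forall fun ω => hfnn k ω)
      have hle1 : (ε₀ : ℝ≥0∞) * μ (B k) ≤ 1 := by
        calc (ε₀ : ℝ≥0∞) * μ (B k) = ε₀ • μ (B k) := rfl
          _ ≤ ENNReal.ofReal (∫ ω in B k, f k ω ∂μ) := hmax
          _ ≤ ENNReal.ofReal (∫ ω, f k ω ∂μ) := ENNReal.ofReal_le_ofReal hsetint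
          _ = 1 := by rw [hint k]; simp
      have hε₀pos : (0 : ℝ≥0∞) < (ε₀ : ℝ≥0∞) := by
        simp only [ENNReal.coe_pos]
        exact Real.toNNReal_pos.2 (Real.exp_pos x)
      have : μ (B k) ≤ (ε₀ : ℝ≥0∞)⁻¹ := by
        rw [ENNReal.le_inv_iff_mul_le, mul_comm]
        exact hle1
      refine this.trans_eq ?_
      rw [show ENNReal.ofReal (Real.exp (-x)) = ENNReal.ofReal ((Real.exp x)⁻¹) by
        rw [← Real.exp_neg],
        ENNReal.ofReal_inv_of_pos (Real.exp_pos x)]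
      rfl
    calc μ {ω | ∃ t : ℕ, n * C + ε ≤ ∑ i, X i t ω} ≤ μ (⋃ k, B k) := measure_mono hsub
      _ = ⨆ k, μ (B k) := (hBmono.directed_le).measure_iUnion
      _ ≤ ENNReal.ofReal (Real.exp (-x)) := iSup_le hBk
  -- main: countable monotone union
  set E : ℕ → Set Ω := fun m => {ω | ∃ t : ℕ, n * C + 1 / (m + 1 : ℝ) ≤ ∑ i, X i t ω} with hE
  have hEsub : {ω | ∃ t : ℕ, n * C < ∑ i, X i t ω} ⊆ ⋃ m, E m := by
    rintro ω ⟨t, ht⟩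
    obtain ⟨m, hm⟩ := exists_nat_one_div_lt (sub_pos.2 ht)
    exact Set.mem_iUnion.2 ⟨m, ⟨t, by linarith⟩⟩
  have hEmono : Monotone E := by
    intro a b hab ω hω
    obtain ⟨t, ht⟩ := hω
    have hc : (a : ℝ) ≤ b := Nat.cast_le.2 hab
    have h1 : (1 : ℝ) / (b + 1) ≤ 1 / (a + 1) :=
      one_div_le_one_div_of_le (by positivity) (by linarith)
    exact ⟨t, le_trans (by linarith) ht⟩
  calc μ {ω | ∃ t : ℕ, n * C < ∑ i, X i t ω} ≤ μ (⋃ m, E m) := measure_mono hEsub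
    _ = ⨆ m, μ (E m) := (hEmono.directed_le).measure_iUnion
    _ ≤ ENNReal.ofReal (Real.exp (-x)) :=
        iSup_le fun m => key _ (by positivity)
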